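/- Let g : ℝⁿ → ℝ be a convex polynomial of degree at most M with g(0) = 0 and ∇g(0) = 0, written g(v) = Σ_α c_α v^α. Suppose there exists A > 0 such that the ball {|v| ≤ A} is contained in the sublevel set {g ≤ 1}. Then there exists a constant C depending only on A, M, and n such that Σ_α |c_α| ≤ C. -/

import Mathlib

open MvPolynomial Finset

private lemma stmt5_coord_le_norm {n : ℕ} (v : EuclideanSpace ℝ (Fin n)) (i : Fin n) :
    |v i| ≤ ‖v‖ := by
  rw [EuclideanSpace.norm_eq]
  have h1 : |v i| = Real.sqrt (‖v i‖ ^ 2) := by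
    rw [Real.sqrt_sq_eq_abs]
    simp [Real.norm_eq_abs, abs_abs]
  rw [h1]
  exact Real.sqrt_le_sqrt (Finset.single_le_sum (fun j _ => sq_nonneg ‖v j‖) (Finset.mem_univ i))

private lemma stmt5_poly_zero {n : ℕ} {A : ℝ} (hA : 0 < A) (p : MvPolynomial (Fin n) ℝ)
    (h : ∀ v : EuclideanSpace ℝ (Fin n), ‖v‖ ≤ A → MvPolynomial.eval (fun i => v i) p = 0) :
    p = 0 := by
  apply MvPolynomial.funext
  intro w
  suffices hw : MvPolynomial.eval w p = 0 by simpa using hw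
  set q : Polynomial ℝ :=
    MvPolynomial.eval₂ Polynomial.C (fun i => Polynomial.C (w i) * Polynomial.X) p with hq
  have key : ∀ t : ℝ, q.eval t = MvPolynomial.eval (fun i => w i * t) p := by
    intro t
    have h2 := MvPolynomial.eval₂_comp_left (Polynomial.evalRingHom t) Polynomial.C
      (fun i => Polynomial.C (w i) * Polynomial.X) p
    have h3 : (Polynomial.evalRingHom t).comp Polynomial.C = RingHom.id ℝ := by
      ext r; simp
    rw [h3] at h2
    simpa [Function.comp_def, MvPolynomial.eval₂_id] using h2
  set w' : EuclideanSpace ℝ (Fin n) := (WithLp.equiv 2 (Fin n → ℝ)).symm w with hw'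
  set δ : ℝ := A / (‖w'‖ + 1) with hδ
  have hnorm1 : (0:ℝ) < ‖w'‖ + 1 := by positivity
  have hδpos : 0 < δ := div_pos hA hnorm1
  have hroots : ∀ t ∈ Set.Icc (-δ) δ, q.IsRoot t := by
    intro t ht
    have hta : |t| ≤ δ := abs_le.mpr ⟨ht.1, ht.2⟩
    have hv : ‖t • w'‖ ≤ A := by
      rw [norm_smul]
      calc ‖t‖ * ‖w'‖ ≤ δ * (‖w'‖ + 1) := by
            apply mul_le_mul (by simpa [Real.norm_eq_abs] using hta) (by linarith)
              (norm_nonneg _) hδpos.le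
        _ = A := by
            rw [hδ, div_mul_cancel₀ _ hnorm1.ne']
    have h4 := h (t • w') hv
    have h5 : (fun i => (t • w') i) = fun i => w i * t := by
      funext i
      simp [hw', mul_comm]
    rw [Polynomial.IsRoot, key t, ← h5]
    exact h4
  have hq0 : q = 0 := by
    apply Polynomial.eq_zero_of_infinite_isRoot
    exact (Set.Icc_infinite (by linarith : -δ < δ)).mono (fun t ht => hroots t ht)
  have := key 1
  rw [hq0] at this
  simpa using this.symm

theorem stmt5 (n M : ℕ) (A : ℝ) (hA : 0 < A) :
    ∃ C : ℝ, 0 < C ∧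
      ∀ g : MvPolynomial (Fin n) ℝ,
        g.totalDegree ≤ M →
        (∀ α ∈ g.support, 2 ≤ ∑ i, α i) →
        ConvexOn ℝ Set.univ (fun v : Fin n → ℝ => MvPolynomial.eval v g) →
        {v : EuclideanSpace ℝ (Fin n) | ‖v‖ ≤ A}
          ⊆ {v : EuclideanSpace ℝ (Fin n) | MvPolynomial.eval (fun i => v i) g ≤ 1} →
        ∑ α ∈ g.support, |MvPolynomial.coeff α g| ≤ C := by
  classical
  set β : Fin n →₀ ℕ := Finsupp.equivFunOnFinite.symm (fun _ => M) with hβ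
  have hβapp : ∀ i, β i = M := fun i => rfl
  set T : Finset (Fin n →₀ ℕ) := Finset.Iic β with hT
  have hmemT : ∀ {a : Fin n →₀ ℕ}, a ∈ T → ∀ i, a i ≤ M := by
    intro a ha i
    have := Finset.mem_Iic.mp ha
    exact le_trans (this i) (le_of_eq (hβapp i))
  have h0T : (0 : Fin n →₀ ℕ) ∈ T := Finset.mem_Iic.mpr (fun i => Nat.zero_le _)
  set R : ℝ := (1 + A) ^ (M * n) with hR
  have h1A : (1:ℝ) ≤ 1 + A := by linarith
  have hR0 : 0 < R := by positivity
  -- the polynomial function of a coefficient vector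
  set Poly : ({a // a ∈ T} → ℝ) → EuclideanSpace ℝ (Fin n) → ℝ :=
    fun c v => ∑ a : {a // a ∈ T}, c a * ∏ i, v i ^ (a.1 i) with hPoly
  -- bound on monomials over the ball
  have hmono : ∀ (a : {a // a ∈ T}) (v : EuclideanSpace ℝ (Fin n)), ‖v‖ ≤ A →
      |∏ i, v i ^ (a.1 i)| ≤ R := by
    intro a v hv
    rw [abs_prod]
    calc ∏ i, |v i ^ (a.1 i)| ≤ ∏ i : Fin n, (1 + A) ^ M := by
          apply Finset.prod_le_prod (fun i _ => abs_nonneg _)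
          intro i _
          rw [abs_pow]
          calc |v i| ^ (a.1 i) ≤ (1 + A) ^ (a.1 i) := by
                apply pow_le_pow_left₀ (abs_nonneg _)
                have := stmt5_coord_le_norm v i
                linarith
            _ ≤ (1 + A) ^ M := pow_le_pow_right₀ h1A (hmemT a.2 i)
      _ = R := by
          rw [Finset.prod_const, hR, ← pow_mul, Finset.card_univ, Fintype.card_fin]
  set N : ({a // a ∈ T} → ℝ) → ℝ := fun c => ∑ a, |c a| with hN
  have hbound : ∀ c (v : EuclideanSpace ℝ (Fin n)), ‖v‖ ≤ A → |Poly c v| ≤ N c * R := by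
    intro c v hv
    calc |Poly c v| ≤ ∑ a, |c a * ∏ i, v i ^ (a.1 i)| := Finset.abs_sum_le_sum_abs _ _
      _ ≤ ∑ a, |c a| * R := by
          apply Finset.sum_le_sum
          intro a _
          rw [abs_mul]
          exact mul_le_mul_of_nonneg_left (hmono a v hv) (abs_nonneg _)
      _ = N c * R := by rw [hN, ← Finset.sum_mul]
  haveI : Nonempty {v : EuclideanSpace ℝ (Fin n) // ‖v‖ ≤ A} :=
    ⟨⟨0, by simp [hA.le]⟩⟩
  set φ : ({a // a ∈ T} → ℝ) → ℝ :=
    fun c => ⨆ v : {v : EuclideanSpace ℝ (Fin n) // ‖v‖ ≤ A}, |Poly c v.1| with hφ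
  have hBdd : ∀ c, BddAbove (Set.range fun v : {v : EuclideanSpace ℝ (Fin n) // ‖v‖ ≤ A} =>
      |Poly c v.1|) := by
    intro c
    refine ⟨N c * R, ?_⟩
    rintro x ⟨v, rfl⟩
    exact hbound c v.1 v.2
  have hφ_le : ∀ c (b : ℝ), (∀ v : EuclideanSpace ℝ (Fin n), ‖v‖ ≤ A → |Poly c v| ≤ b) →
      φ c ≤ b := fun c b hb => ciSup_le (fun v => hb v.1 v.2)
  have hle_φ : ∀ c (v : EuclideanSpace ℝ (Fin n)), ‖v‖ ≤ A → |Poly c v| ≤ φ c := by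
    intro c v hv
    exact le_ciSup (hBdd c) (⟨v, hv⟩ : {v : EuclideanSpace ℝ (Fin n) // ‖v‖ ≤ A})
  have hφ0 : ∀ c, 0 ≤ φ c := fun c =>
    le_trans (abs_nonneg _) (hle_φ c 0 (by simp [hA.le]))
  set K : ℝ := (Fintype.card {a // a ∈ T} : ℝ) * R with hK
  have hK0 : 0 ≤ K := by positivity
  have hsub : ∀ c c' (v : EuclideanSpace ℝ (Fin n)), Poly c v - Poly c' v = Poly (c - c') v := by
    intro c c' v
    simp [hPoly, sub_mul, Finset.sum_sub_distrib]
  have hlip : ∀ c c', φ c ≤ φ c' + K * dist c c' := by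
    intro c c'
    apply hφ_le
    intro v hv
    have h1 : |Poly c v| ≤ |Poly c' v| + |Poly (c - c') v| := by
      have := abs_sub_abs_le_abs_sub (Poly c v) (Poly c' v)
      have h2 := abs_sub (Poly c v) (Poly c' v)
      calc |Poly c v| ≤ |Poly c' v| + |Poly c v - Poly c' v| := by
            have := abs_add_le (Poly c' v) (Poly c v - Poly c' v)
            simpa using this
        _ = |Poly c' v| + |Poly (c - c') v| := by rw [hsub]
    have h3 : N (c - c') ≤ (Fintype.card {a // a ∈ T} : ℝ) * dist c c' := by
      rw [hN]
      calc ∑ a, |(c - c') a| ≤ ∑ _a : {a // a ∈ T}, dist c c' := by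
            apply Finset.sum_le_sum
            intro a _
            have := norm_le_pi_norm (c - c') a
            simpa [Real.norm_eq_abs, dist_eq_norm] using this
        _ = (Fintype.card {a // a ∈ T} : ℝ) * dist c c' := by
            rw [Finset.sum_const, Finset.card_univ, nsmul_eq_mul]
    calc |Poly c v| ≤ |Poly c' v| + |Poly (c - c') v| := h1
      _ ≤ φ c' + N (c - c') * R := by
          have := hbound (c - c') v hv
          have h4 := hle_φ c' v hv
          linarith
      _ ≤ φ c' + K * dist c c' := by
          have h5 : N (c - c') * R ≤ ((Fintype.card {a // a ∈ T} : ℝ) * dist c c') * R :=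
            mul_le_mul_of_nonneg_right h3 hR0.le
          rw [hK]
          nlinarith [dist_nonneg (x := c) (y := c')]
  have hcont : Continuous φ := by
    apply LipschitzWith.continuous (K := K.toNNReal)
    apply LipschitzWith.of_dist_le_mul
    intro c c'
    rw [Real.dist_eq, Real.coe_toNNReal K hK0]
    rw [abs_sub_le_iff]
    constructor
    · have := hlip c c'; linarith
    · have := hlip c' c; rw [dist_comm] at this; linarith
  set S : Set ({a // a ∈ T} → ℝ) := {c | N c = 1} with hS
  have hNcont : Continuous N := by
    apply continuous_finset_sum
    intro a _
    exact (continuous_apply a).abs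
  have hSclosed : IsClosed S := by
    have : S = N ⁻¹' {1} := rfl
    rw [this]
    exact IsClosed.preimage hNcont isClosed_singleton
  have hSbounded : Bornology.IsBounded S := by
    apply Bornology.IsBounded.subset (Metric.isBounded_closedBall (x := (0 : {a // a ∈ T} → ℝ)) (r := 1))
    intro c hc
    rw [Metric.mem_closedBall, dist_zero_right]
    rw [pi_norm_le_iff_of_nonneg zero_le_one]
    intro a
    rw [Real.norm_eq_abs]
    calc |c a| ≤ ∑ b, |c b| :=
          Finset.single_le_sum (f := fun b => |c b|) (fun b _ => abs_nonneg _) (Finset.mem_univ a)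
      _ = 1 := hc
  have hScompact : IsCompact S := Metric.isCompact_of_isClosed_isBounded hSclosed hSbounded
  have hSne : S.Nonempty := by
    refine ⟨Pi.single (⟨0, h0T⟩ : {a // a ∈ T}) 1, ?_⟩
    show ∑ a : {a // a ∈ T}, |Pi.single (⟨0, h0T⟩ : {a // a ∈ T}) 1 a| = 1
    rw [Fintype.sum_eq_single (⟨0, h0T⟩ : {a // a ∈ T})]
    · simp
    · intro b hb
      rw [Pi.single_eq_of_ne hb]
      simp
  obtain ⟨c₀, hc₀S, hmin⟩ := hScompact.exists_isMinOn hSne hcont.continuousOn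
  set ε : ℝ := φ c₀ with hε
  have hεpos : 0 < ε := by
    rcases lt_or_eq_of_le (hφ0 c₀) with h | h
    · exact h
    · exfalso
      have hz : ∀ v : EuclideanSpace ℝ (Fin n), ‖v‖ ≤ A → Poly c₀ v = 0 := by
        intro v hv
        have h6 := hle_φ c₀ v hv
        have hε0 : ε = 0 := by rw [hε, ← h]
        rw [← hε, hε0] at h6
        exact abs_eq_zero.mp (le_antisymm h6 (abs_nonneg _))
      set P₀ : MvPolynomial (Fin n) ℝ :=
        ∑ a : {a // a ∈ T}, MvPolynomial.monomial a.1 (c₀ a) with hP₀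
      have hevalP : ∀ v : EuclideanSpace ℝ (Fin n),
          MvPolynomial.eval (fun i => v i) P₀ = Poly c₀ v := by
        intro v
        rw [hP₀, map_sum]
        apply Finset.sum_congr rfl
        intro a _
        rw [MvPolynomial.eval_monomial]
        rw [Finsupp.prod_pow]
      have hP0 : P₀ = 0 := by
        apply stmt5_poly_zero hA
        intro v hv
        rw [hevalP]
        exact hz v hv
      have hc₀0 : c₀ = 0 := by
        funext a
        have hcoeff : MvPolynomial.coeff a.1 P₀ = c₀ a := by
          rw [hP₀, MvPolynomial.coeff_sum]
          rw [Fintype.sum_eq_single a]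
          · rw [MvPolynomial.coeff_monomial, if_pos rfl]
          · intro b hb
            rw [MvPolynomial.coeff_monomial, if_neg]
            intro hab
            exact hb (Subtype.ext hab)
        rw [← hcoeff, hP0]
        simp
      have : N c₀ = 1 := hc₀S
      rw [hc₀0, hN] at this
      simp at this
  refine ⟨1 / ε, by positivity, ?_⟩
  intro g hdeg hmon hconv hball
  have hsupp : g.support ⊆ T := by
    intro α hα
    rw [hT, Finset.mem_Iic]
    intro i
    have hαsum : (α.sum fun _ e => e) ≤ M := le_trans (MvPolynomial.le_totalDegree hα) hdeg
    have hile : α i ≤ α.sum fun _ e => e := by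
      by_cases hi : α i = 0
      · simp [hi]
      · exact Finset.single_le_sum (f := fun j => α j) (fun j _ => Nat.zero_le _)
          (Finsupp.mem_support_iff.mpr hi)
    exact le_trans (le_trans hile hαsum) (le_of_eq (hβapp i).symm)
  set c : {a // a ∈ T} → ℝ := fun a => MvPolynomial.coeff a.1 g with hc
  have heval : ∀ v : EuclideanSpace ℝ (Fin n),
      MvPolynomial.eval (fun i => v i) g = Poly c v := by
    intro v
    rw [MvPolynomial.eval_eq']
    rw [Finset.sum_subset hsupp
      (fun x _ hx => by rw [MvPolynomial.notMem_support_iff.mp hx, zero_mul])]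
    exact (Finset.sum_coe_sort T
      (fun a => MvPolynomial.coeff a g * ∏ i, v i ^ a i)).symm
  have g0 : MvPolynomial.eval (0 : Fin n → ℝ) g = 0 := by
    rw [MvPolynomial.eval_eq']
    apply Finset.sum_eq_zero
    intro d hd
    have h2 := hmon d hd
    have hex : ∃ i, d i ≠ 0 := by
      by_contra hno
      push_neg at hno
      simp [hno] at h2
    obtain ⟨i, hi⟩ := hex
    rw [Finset.prod_eq_zero (Finset.mem_univ i) (by simp [zero_pow hi]), mul_zero]
  have habs : ∀ v : EuclideanSpace ℝ (Fin n), ‖v‖ ≤ A → |Poly c v| ≤ 1 := by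
    intro v hv
    rw [← heval v, abs_le]
    refine ⟨?_, hball hv⟩
    have hub' : MvPolynomial.eval (fun i => (-v) i) g ≤ 1 :=
      hball (show ‖-v‖ ≤ A by rw [norm_neg]; exact hv)
    have hneg : (fun i => (-v) i) = fun i => -(v i) := by funext i; rfl
    rw [hneg] at hub'
    have hcomb := hconv.2 (Set.mem_univ (fun i => v i)) (Set.mem_univ (fun i => -(v i)))
      (by norm_num : (0:ℝ) ≤ 1/2) (by norm_num : (0:ℝ) ≤ 1/2) (by norm_num)
    have hmid : (1/2 : ℝ) • (fun i => v i) + (1/2 : ℝ) • (fun i => -(v i)) = (0 : Fin n → ℝ) := by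
      funext i
      simp only [Pi.add_apply, Pi.smul_apply, smul_eq_mul, Pi.zero_apply]
      ring
    rw [hmid] at hcomb
    simp only [smul_eq_mul] at hcomb
    rw [g0] at hcomb
    linarith
  calc ∑ α ∈ g.support, |MvPolynomial.coeff α g|
      ≤ ∑ α ∈ T, |MvPolynomial.coeff α g| :=
        Finset.sum_le_sum_of_subset_of_nonneg hsupp (fun _ _ _ => abs_nonneg _)
    _ = N c := (Finset.sum_coe_sort T (fun α => |MvPolynomial.coeff α g|)).symm
    _ ≤ 1 / ε := by
        by_cases hNc : N c = 0
        · rw [hNc]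
          positivity
        · have hNnn : 0 ≤ N c := Finset.sum_nonneg (fun a _ => abs_nonneg _)
          have hNpos : 0 < N c := lt_of_le_of_ne hNnn (Ne.symm hNc)
          set c' : {a // a ∈ T} → ℝ := (N c)⁻¹ • c with hc'
          have hc'S : c' ∈ S := by
            show N c' = 1
            calc N c' = ∑ a, (N c)⁻¹ * |c a| := by
                  apply Finset.sum_congr rfl
                  intro a _
                  rw [hc']
                  simp only [Pi.smul_apply, smul_eq_mul, abs_mul,
                    abs_of_pos (inv_pos.mpr hNpos)]
              _ = (N c)⁻¹ * N c := by rw [← Finset.mul_sum]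
              _ = 1 := inv_mul_cancel₀ hNc
          have h7 : ε ≤ φ c' := isMinOn_iff.mp hmin c' hc'S
          have h8 : φ c' ≤ (N c)⁻¹ := by
            apply hφ_le
            intro v hv
            have h9 : Poly c' v = (N c)⁻¹ * Poly c v := by
              rw [hPoly, hc']
              simp only [Pi.smul_apply, smul_eq_mul]
              rw [Finset.mul_sum]
              apply Finset.sum_congr rfl
              intro a _
              ring
            rw [h9, abs_mul, abs_of_pos (inv_pos.mpr hNpos)]
            calc (N c)⁻¹ * |Poly c v| ≤ (N c)⁻¹ * 1 :=
                  mul_le_mul_of_nonneg_left (habs v hv) (inv_pos.mpr hNpos).le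
              _ = (N c)⁻¹ := mul_one _
          have h10 : ε ≤ (N c)⁻¹ := le_trans h7 h8
          have h11 := mul_le_mul_of_nonneg_right h10 hNnn
          rw [inv_mul_cancel₀ hNc] at h11
          rw [le_div_iff₀ hεpos]
          nlinarith
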